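/- For the grid graph G = P_r □ P_t with r ≥ t ≥ 2, the set consisting of the two corner vertices (0,0) and (r−1,0) is an edge metric generator, and edim(G) = 2. -/

import Mathlib

open SimpleGraph

/-- Distance from a vertex `v` to an edge `e = uw`: `min (d v u) (d v w)`. -/
noncomputable def edgeDist {V : Type*} (G : SimpleGraph V) (v : V) (e : Sym2 V) : ℕ :=
  Sym2.lift ⟨fun u w => min (G.dist v u) (G.dist v w), fun u w => by simp [min_comm]⟩ e

/-- `S` is an edge metric generator: every two distinct edges are distinguished
by some vertex of `S`. -/
def IsEdgeMetricGenerator {V : Type*} (G : SimpleGraph V) (S : Set V) : Prop :=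
  ∀ e₁ ∈ G.edgeSet, ∀ e₂ ∈ G.edgeSet, e₁ ≠ e₂ →
    ∃ v ∈ S, edgeDist G v e₁ ≠ edgeDist G v e₂

/-- The edge metric dimension: minimum cardinality of an edge metric generator. -/
noncomputable def edim {V : Type*} (G : SimpleGraph V) : ℕ :=
  sInf {k | ∃ S : Finset V, S.card = k ∧ IsEdgeMetricGenerator G ↑S}

lemma edgeDist_mk {V : Type*} (G : SimpleGraph V) (v u w : V) :
    edgeDist G v s(u, w) = min (G.dist v u) (G.dist v w) := rfl

lemma grid_adj_iff {r t : ℕ} {p q : Fin r × Fin t} :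
    (pathGraph r □ pathGraph t).Adj p q ↔
    ((p.1.val + 1 = q.1.val ∨ q.1.val + 1 = p.1.val) ∧ p.2.val = q.2.val) ∨
    ((p.2.val + 1 = q.2.val ∨ q.2.val + 1 = p.2.val) ∧ p.1.val = q.1.val) := by
  simp [boxProd_adj, pathGraph_adj, Fin.ext_iff]

/-- `L¹` distance on the grid, as a natural number. -/
def gD {r t : ℕ} (p q : Fin r × Fin t) : ℕ :=
  (p.1.val - q.1.val) + (q.1.val - p.1.val) + ((p.2.val - q.2.val) + (q.2.val - p.2.val))

lemma length_ge {V : Type*} {G : SimpleGraph V} (f : V → ℕ)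
    (h : ∀ x y, G.Adj x y → f x ≤ f y + 1) :
    ∀ {u v : V} (p : G.Walk u v), f u ≤ f v + p.length := by
  intro u v p
  induction p with
  | nil => simp
  | cons hadj p ih =>
    have := h _ _ hadj
    simp only [Walk.length_cons]
    omega

lemma grid_walk {r t : ℕ} :
    ∀ (n : ℕ) (p q : Fin r × Fin t), gD p q = n →
      ∃ w : (pathGraph r □ pathGraph t).Walk p q, w.length = n := by
  intro n
  induction n with
  | zero =>
    intro p q h
    have : p = q := by
      have h1 := p.1.2; have h2 := q.1.2
      ext
      · simp only [gD] at h; omega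
      · simp only [gD] at h; omega
    subst this
    exact ⟨Walk.nil, rfl⟩
  | succ n ih =>
    intro p q h
    by_cases h1 : p.1.val < q.1.val
    · have hlt : p.1.val + 1 < r := by omega
      set p' : Fin r × Fin t := (⟨p.1.val + 1, hlt⟩, p.2) with hp'
      have hadj : (pathGraph r □ pathGraph t).Adj p p' := by
        rw [grid_adj_iff]; left; exact ⟨Or.inl rfl, rfl⟩
      obtain ⟨w, hw⟩ := ih p' q (by simp only [gD, hp'] at h ⊢; omega)
      exact ⟨Walk.cons hadj w, by simp [hw]⟩
    · by_cases h2 : q.1.val < p.1.val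
      · have hlt : p.1.val - 1 < r := by omega
        set p' : Fin r × Fin t := (⟨p.1.val - 1, hlt⟩, p.2) with hp'
        have hadj : (pathGraph r □ pathGraph t).Adj p p' := by
          rw [grid_adj_iff]; left; exact ⟨Or.inr (by simp [hp']; omega), rfl⟩
        obtain ⟨w, hw⟩ := ih p' q (by simp only [gD, hp'] at h ⊢; omega)
        exact ⟨Walk.cons hadj w, by simp [hw]⟩
      · by_cases h3 : p.2.val < q.2.val
        · have hlt : p.2.val + 1 < t := by omega
          set p' : Fin r × Fin t := (p.1, ⟨p.2.val + 1, hlt⟩) with hp'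
          have hadj : (pathGraph r □ pathGraph t).Adj p p' := by
            rw [grid_adj_iff]; right; exact ⟨Or.inl rfl, rfl⟩
          obtain ⟨w, hw⟩ := ih p' q (by simp only [gD, hp'] at h ⊢; omega)
          exact ⟨Walk.cons hadj w, by simp [hw]⟩
        · by_cases h4 : q.2.val < p.2.val
          · have hlt : p.2.val - 1 < t := by omega
            set p' : Fin r × Fin t := (p.1, ⟨p.2.val - 1, hlt⟩) with hp'
            have hadj : (pathGraph r □ pathGraph t).Adj p p' := by
              rw [grid_adj_iff]; right; exact ⟨Or.inr (by simp [hp']; omega), rfl⟩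
            obtain ⟨w, hw⟩ := ih p' q (by simp only [gD, hp'] at h ⊢; omega)
            exact ⟨Walk.cons hadj w, by simp [hw]⟩
          · exfalso; simp only [gD] at h; omega

lemma grid_dist {r t : ℕ} (p q : Fin r × Fin t) :
    (pathGraph r □ pathGraph t).dist p q = gD p q := by
  obtain ⟨w, hw⟩ := grid_walk (gD p q) p q rfl
  have hreach : (pathGraph r □ pathGraph t).Reachable p q := ⟨w⟩
  obtain ⟨w', hw'⟩ := hreach.exists_walk_length_eq_dist
  refine le_antisymm (hw ▸ dist_le w) ?_
  have hf : ∀ x y : Fin r × Fin t, (pathGraph r □ pathGraph t).Adj x y →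
      gD x q ≤ gD y q + 1 := by
    intro x y hxy
    rw [grid_adj_iff] at hxy
    simp only [gD]
    omega
  have := length_ge (fun x => gD x q) hf w'
  simp only [gD] at this ⊢
  omega

set_option maxHeartbeats 1600000 in
lemma grid_gen (r t : ℕ) (hrt : t ≤ r) (ht : 2 ≤ t) :
    IsEdgeMetricGenerator (pathGraph r □ pathGraph t)
      {(⟨0, by omega⟩, ⟨0, Nat.lt_of_lt_of_le (by norm_num) ht⟩), (⟨r - 1, by omega⟩, ⟨0, Nat.lt_of_lt_of_le (by norm_num) ht⟩)} := by
  intro e₁ he₁ e₂ he₂ hne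
  revert he₁ hne
  induction e₁ using Sym2.ind with
  | _ u₁ w₁ =>
  revert he₂
  induction e₂ using Sym2.ind with
  | _ u₂ w₂ =>
  intro he₂ he₁ hne
  rw [mem_edgeSet, grid_adj_iff] at he₁ he₂
  by_contra hc
  push_neg at hc
  have h0 := hc (⟨0, by omega⟩, ⟨0, by omega⟩) (Set.mem_insert _ _)
  have h1 := hc (⟨r - 1, by omega⟩, ⟨0, by omega⟩)
    (Set.mem_insert_iff.mpr (Or.inr rfl))
  simp only [edgeDist_mk, grid_dist, gD, Fin.val_mk] at h0 h1
  simp only [ne_eq, Sym2.eq_iff, Prod.ext_iff, Fin.ext_iff, not_or, not_and] at hne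
  have hu₁ := u₁.1.2; have hw₁ := w₁.1.2; have hu₂ := u₂.1.2; have hw₂ := w₂.1.2
  simp only [Nat.zero_sub, Nat.sub_zero, Nat.zero_add] at h0 h1
  obtain ⟨s1, hs1⟩ : ∃ s, ↑u₁.1 + s = r - 1 := ⟨r - 1 - ↑u₁.1, by omega⟩
  obtain ⟨s2, hs2⟩ : ∃ s, ↑w₁.1 + s = r - 1 := ⟨r - 1 - ↑w₁.1, by omega⟩
  obtain ⟨s3, hs3⟩ : ∃ s, ↑u₂.1 + s = r - 1 := ⟨r - 1 - ↑u₂.1, by omega⟩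
  obtain ⟨s4, hs4⟩ : ∃ s, ↑w₂.1 + s = r - 1 := ⟨r - 1 - ↑w₂.1, by omega⟩
  rw [show r - 1 - ↑u₁.1 + (↑u₁.1 - (r - 1)) = s1 from by omega,
      show r - 1 - ↑w₁.1 + (↑w₁.1 - (r - 1)) = s2 from by omega,
      show r - 1 - ↑u₂.1 + (↑u₂.1 - (r - 1)) = s3 from by omega,
      show r - 1 - ↑w₂.1 + (↑w₂.1 - (r - 1)) = s4 from by omega] at h1
  rcases he₁ with ⟨hA | hA, hB⟩ | ⟨hA | hA, hB⟩ <;>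
    rcases he₂ with ⟨hC | hC, hD⟩ | ⟨hC | hC, hD⟩ <;> omega

lemma one_vertex_fails (r t : ℕ) (ht : 2 ≤ t) (hrt : t ≤ r) (v : Fin r × Fin t) :
    ∃ e₁ ∈ (pathGraph r □ pathGraph t).edgeSet, ∃ e₂ ∈ (pathGraph r □ pathGraph t).edgeSet,
      e₁ ≠ e₂ ∧ edgeDist (pathGraph r □ pathGraph t) v e₁ =
        edgeDist (pathGraph r □ pathGraph t) v e₂ := by
  obtain ⟨a, b⟩ := v
  have ha := a.2; have hb := b.2
  by_cases h1 : 1 ≤ a.val <;> by_cases h2 : 1 ≤ b.val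
  · -- corner (0,0)
    refine ⟨s((⟨0, by omega⟩, ⟨0, by omega⟩), (⟨1, by omega⟩, ⟨0, by omega⟩)), ?_,
      s((⟨0, by omega⟩, ⟨0, by omega⟩), (⟨0, by omega⟩, ⟨1, by omega⟩)), ?_, ?_, ?_⟩
    · rw [mem_edgeSet, grid_adj_iff]; simp
    · rw [mem_edgeSet, grid_adj_iff]; simp
    · simp only [ne_eq, Sym2.eq_iff, Prod.ext_iff, Fin.ext_iff, not_or, not_and]; omega
    · simp only [edgeDist_mk, grid_dist, gD, Fin.val_mk]; omega
  · -- corner (0, t-1)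
    refine ⟨s((⟨0, by omega⟩, ⟨t - 1, by omega⟩), (⟨1, by omega⟩, ⟨t - 1, by omega⟩)), ?_,
      s((⟨0, by omega⟩, ⟨t - 1, by omega⟩), (⟨0, by omega⟩, ⟨t - 2, by omega⟩)), ?_, ?_, ?_⟩
    · rw [mem_edgeSet, grid_adj_iff]; simp
    · rw [mem_edgeSet, grid_adj_iff]; simp; omega
    · simp only [ne_eq, Sym2.eq_iff, Prod.ext_iff, Fin.ext_iff, not_or, not_and]; omega
    · simp only [edgeDist_mk, grid_dist, gD, Fin.val_mk]; omega
  · -- corner (r-1, 0)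
    refine ⟨s((⟨r - 1, by omega⟩, ⟨0, by omega⟩), (⟨r - 2, by omega⟩, ⟨0, by omega⟩)), ?_,
      s((⟨r - 1, by omega⟩, ⟨0, by omega⟩), (⟨r - 1, by omega⟩, ⟨1, by omega⟩)), ?_, ?_, ?_⟩
    · rw [mem_edgeSet, grid_adj_iff]; simp; omega
    · rw [mem_edgeSet, grid_adj_iff]; simp
    · simp only [ne_eq, Sym2.eq_iff, Prod.ext_iff, Fin.ext_iff, not_or, not_and]; omega
    · simp only [edgeDist_mk, grid_dist, gD, Fin.val_mk]; omega
  · -- corner (r-1, t-1)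
    refine ⟨s((⟨r - 1, by omega⟩, ⟨t - 1, by omega⟩), (⟨r - 2, by omega⟩, ⟨t - 1, by omega⟩)), ?_,
      s((⟨r - 1, by omega⟩, ⟨t - 1, by omega⟩), (⟨r - 1, by omega⟩, ⟨t - 2, by omega⟩)), ?_, ?_, ?_⟩
    · rw [mem_edgeSet, grid_adj_iff]; simp; omega
    · rw [mem_edgeSet, grid_adj_iff]; simp; omega
    · simp only [ne_eq, Sym2.eq_iff, Prod.ext_iff, Fin.ext_iff, not_or, not_and]; omega
    · simp only [edgeDist_mk, grid_dist, gD, Fin.val_mk]; omega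

theorem edim_grid (r t : ℕ) (ht : 2 ≤ t) (hrt : t ≤ r) :
    IsEdgeMetricGenerator (pathGraph r □ pathGraph t)
      {(⟨0, by omega⟩, ⟨0, by omega⟩), (⟨r - 1, by omega⟩, ⟨0, by omega⟩)} ∧
    edim (pathGraph r □ pathGraph t) = 2 := by
  have hgen := grid_gen r t hrt ht
  refine ⟨hgen, ?_⟩
  set c0 : Fin r × Fin t := (⟨0, by omega⟩, ⟨0, by omega⟩) with hc0
  set c1 : Fin r × Fin t := (⟨r - 1, by omega⟩, ⟨0, by omega⟩) with hc1
  have hne01 : c0 ≠ c1 := by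
    simp only [hc0, hc1, Prod.ext_iff, Fin.ext_iff, ne_eq, not_and]; intro h; omega
  have h2mem : 2 ∈ {k | ∃ S : Finset (Fin r × Fin t), S.card = k ∧
      IsEdgeMetricGenerator (pathGraph r □ pathGraph t) ↑S} := by
    refine ⟨{c0, c1}, Finset.card_pair hne01, ?_⟩
    have : ↑({c0, c1} : Finset (Fin r × Fin t)) = ({c0, c1} : Set (Fin r × Fin t)) := by
      simp
    rw [this]
    exact hgen
  refine le_antisymm (Nat.sInf_le h2mem) (le_csInf ⟨2, h2mem⟩ ?_)
  rintro k ⟨S, hcard, hSgen⟩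
  by_contra hk
  push_neg at hk
  interval_cases k
  · -- empty set
    rw [Finset.card_eq_zero] at hcard
    subst hcard
    obtain ⟨e₁, he₁, e₂, he₂, hne, -⟩ := one_vertex_fails r t ht hrt c0
    obtain ⟨v, hv, -⟩ := hSgen e₁ he₁ e₂ he₂ hne
    simp at hv
  · -- singleton
    rw [Finset.card_eq_one] at hcard
    obtain ⟨v, rfl⟩ := hcard
    obtain ⟨e₁, he₁, e₂, he₂, hne, heq⟩ := one_vertex_fails r t ht hrt v
    obtain ⟨w, hw, hne'⟩ := hSgen e₁ he₁ e₂ he₂ hne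
    simp only [Finset.coe_singleton, Set.mem_singleton_iff] at hw
    subst hw
    exact hne' heq
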